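/- Let μ* be an upper quasi-density on ℕ and X ⊆ ℕ. Then inf{ μ*(A) : A a finite union of arithmetic progressions of ℕ with X ⊆ A } = inf_{k ≥ 1} r_k(X)/k; in particular, this infimum does not depend on the choice of the upper quasi-density μ*. -/

import Mathlib

open Set Filter Topology

/-- An upper quasi-density on ℕ. -/
def IsUpperQuasiDensity (μ : Set ℕ → ℝ) : Prop :=
  μ Set.univ = 1 ∧
  (∀ X : Set ℕ, μ X ≤ 1) ∧
  (∀ X Y : Set ℕ, μ (X ∪ Y) ≤ μ X + μ Y) ∧
  (∀ (X : Set ℕ) (k : ℕ), 0 < k → μ ((fun x => k * x) '' X) = μ X / k) ∧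
  (∀ (X : Set ℕ) (h : ℕ), μ ((fun x => x + h) '' X) = μ X)

/-- An upper density on ℕ: a monotone upper quasi-density. -/
def IsUpperDensity (μ : Set ℕ → ℝ) : Prop :=
  IsUpperQuasiDensity μ ∧ ∀ X Y : Set ℕ, X ⊆ Y → μ X ≤ μ Y

/-- A set of naturals is small if every upper quasi-density vanishes on it. -/
def SmallSet (X : Set ℕ) : Prop :=
  ∀ μ : Set ℕ → ℝ, IsUpperQuasiDensity μ → μ X = 0

/-- The upper asymptotic density of a set of naturals. -/
noncomputable def upperAsymptoticDensity (X : Set ℕ) : ℝ :=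
  limsup (fun n : ℕ => ((X ∩ Set.Icc 1 n).ncard : ℝ) / n) atTop

/-- The arithmetic progression k·ℕ + h. -/
def AP (k h : ℕ) : Set ℕ := {x : ℕ | ∃ m : ℕ, x = k * m + h}

/-- A finite union of arithmetic progressions of ℕ. -/
def IsFinUnionAP (A : Set ℕ) : Prop :=
  ∃ s : Finset (ℕ × ℕ), (∀ p ∈ s, 0 < p.1) ∧ A = ⋃ p ∈ s, AP p.1 p.2

/-- The upper Buck density of a set of naturals. -/
noncomputable def buckDensity (X : Set ℕ) : ℝ :=
  sInf {d : ℝ | ∃ A : Set ℕ, IsFinUnionAP A ∧ X ⊆ A ∧ d = upperAsymptoticDensity A}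

/-- `rk k X` is the number of residues h ∈ [0, k-1] with X ∩ (k·ℕ + h) ≠ ∅. -/
noncomputable def rk (k : ℕ) (X : Set ℕ) : ℕ :=
  {h : ℕ | h < k ∧ (X ∩ AP k h).Nonempty}.ncard

/-- `wk μ k S` is the number of residues h ∈ [0, k-1] with μ(S ∩ (k·ℕ + h)) ≠ 0. -/
noncomputable def wk (μ : Set ℕ → ℝ) (k : ℕ) (S : Set ℕ) : ℕ :=
  {h : ℕ | h < k ∧ μ (S ∩ AP k h) ≠ 0}.ncard

open scoped Classical

variable {μ : Set ℕ → ℝ}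

lemma mu_empty (hμ : IsUpperQuasiDensity μ) : μ ∅ = 0 := by
  obtain ⟨-, -, -, h4, -⟩ := hμ
  have := h4 ∅ 2 (by norm_num)
  simp only [Set.image_empty] at this
  linarith

lemma mu_AP (hμ : IsUpperQuasiDensity μ) {k : ℕ} (hk : 0 < k) (h : ℕ) :
    μ (AP k h) = 1 / k := by
  obtain ⟨h1, -, -, h4, h5⟩ := hμ
  have e1 : (fun x => x + h) '' ((fun x => k * x) '' Set.univ) = AP k h := by
    ext x
    simp only [AP, Set.mem_image, Set.mem_univ, true_and, Set.mem_setOf_eq]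
    constructor
    · rintro ⟨a, ⟨m, rfl⟩, rfl⟩; exact ⟨m, rfl⟩
    · rintro ⟨m, rfl⟩; exact ⟨k * m, ⟨m, rfl⟩, rfl⟩
  rw [← e1, h5, h4 _ _ hk, h1]

lemma mu_singleton (hμ : IsUpperQuasiDensity μ) (n : ℕ) : μ {n} = 0 := by
  obtain ⟨-, -, -, h4, h5⟩ := hμ
  have h0 : μ {0} = 0 := by
    have := h4 {0} 2 (by norm_num)
    simp only [Set.image_singleton, Nat.mul_zero] at this
    linarith
  have e : (fun x => x + n) '' {0} = {n} := by simp
  rw [← e, h5, h0]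

lemma mu_biUnion (hμ : IsUpperQuasiDensity μ) {ι : Type*} (t : Finset ι) (f : ι → Set ℕ) :
    μ (⋃ i ∈ t, f i) ≤ ∑ i ∈ t, μ (f i) := by
  induction t using Finset.induction_on with
  | empty => simp [mu_empty hμ]
  | insert _ _ hni ih =>
      rename_i a s
      rw [Finset.set_biUnion_insert, Finset.sum_insert hni]
      exact le_trans (hμ.2.2.1 _ _) (by linarith)

lemma mu_finite_nonpos (hμ : IsUpperQuasiDensity μ) {X : Set ℕ} (hX : X.Finite) :
    μ X ≤ 0 := by
  have e : X = ⋃ x ∈ hX.toFinset, {x} := by simp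
  rw [e]
  calc μ _ ≤ ∑ x ∈ hX.toFinset, μ {x} := mu_biUnion hμ _ _
    _ = 0 := by simp [mu_singleton hμ]

lemma rk_eq_card (k : ℕ) (X : Set ℕ) :
    rk k X = ((Finset.range k).filter (fun h => (X ∩ AP k h).Nonempty)).card := by
  rw [rk, ← Set.ncard_coe_finset]
  congr 1
  ext h
  simp [Finset.mem_filter, Finset.mem_range]

lemma self_mem_AP {k : ℕ} (x : ℕ) : x ∈ AP k (x % k) :=
  ⟨x / k, (Nat.div_add_mod x k).symm⟩


lemma key_upper (hμ : IsUpperQuasiDensity μ) (X : Set ℕ) {k : ℕ} (hk : 0 < k) :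
    ∃ A : Set ℕ, IsFinUnionAP A ∧ X ⊆ A ∧ μ A ≤ (rk k X : ℝ) / k := by
  set O : Finset ℕ := (Finset.range k).filter (fun h => (X ∩ AP k h).Nonempty) with hO
  refine ⟨⋃ h ∈ O, AP k h, ⟨O.image (fun h => (k, h)), ?_, ?_⟩, ?_, ?_⟩
  · rintro p hp
    simp only [Finset.mem_image] at hp
    obtain ⟨h, -, rfl⟩ := hp
    exact hk
  · ext x
    simp only [Set.mem_iUnion, Finset.mem_image, exists_prop]
    constructor
    · rintro ⟨h, hh, hx⟩; exact ⟨(k, h), ⟨h, hh, rfl⟩, hx⟩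
    · rintro ⟨p, ⟨h, hh, rfl⟩, hx⟩; exact ⟨h, hh, hx⟩
  · intro x hx
    exact Set.mem_biUnion
      (Finset.mem_filter.mpr ⟨Finset.mem_range.mpr (Nat.mod_lt x hk), ⟨x, hx, self_mem_AP x⟩⟩)
      (self_mem_AP x)
  · calc μ _ ≤ ∑ h ∈ O, μ (AP k h) := mu_biUnion hμ _ _
      _ = ∑ _h ∈ O, (1 / k : ℝ) := Finset.sum_congr rfl (fun h _ => mu_AP hμ hk h)
      _ = O.card * (1 / k) := by rw [Finset.sum_const, nsmul_eq_mul]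
      _ = (rk k X : ℝ) / k := by rw [rk_eq_card]; ring

lemma key_lower (hμ : IsUpperQuasiDensity μ) {X A : Set ℕ} (hA : IsFinUnionAP A)
    (hXA : X ⊆ A) : ∃ k : ℕ, 0 < k ∧ (rk k X : ℝ) / k ≤ μ A := by
  obtain ⟨s, hs, rfl⟩ := hA
  set A := ⋃ p ∈ s, AP p.1 p.2 with hAdef
  set k := ∏ p ∈ s, p.1 with hkdef
  have hk : 0 < k := Finset.prod_pos (fun p hp => hs p hp)
  have hkR : (0 : ℝ) < k := by exact_mod_cast hk
  set N := s.sup Prod.snd with hN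
  set O : Finset ℕ := (Finset.range k).filter (fun h => (A ∩ AP k h).Nonempty) with hO
  set T : Finset ℕ := (Finset.range k).filter (fun h => ¬ (A ∩ AP k h).Nonempty) with hT
  refine ⟨k, hk, ?_⟩
  have hcover : (Set.univ : Set ℕ) ⊆ A ∪ ((⋃ h ∈ T, AP k h) ∪ Set.Iio N) := by
    intro x _
    by_cases hxN : x < N
    · exact Or.inr (Or.inr hxN)
    by_cases hocc : (A ∩ AP k (x % k)).Nonempty
    · left
      obtain ⟨y, hyA, m', hym⟩ := hocc
      rw [hAdef] at hyA
      obtain ⟨p, hps, hyp⟩ := Set.mem_iUnion₂.mp hyA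
      obtain ⟨m, hm⟩ := hyp
      have hdvd : p.1 ∣ k := Finset.dvd_prod_of_mem _ hps
      have hp2N : p.2 ≤ N := Finset.le_sup (f := Prod.snd) hps
      have hxy : x ≡ y [MOD k] := by
        have h1 : (k * m' + (x % k)) % k = x % k := by
          rw [Nat.mul_add_mod, Nat.mod_mod_of_dvd x dvd_rfl]
        show x % k = y % k
        rw [hym, h1]
      have hxp : x ≡ p.2 [MOD p.1] := by
        refine ((hxy.of_dvd hdvd).trans ?_)
        show y % p.1 = p.2 % p.1
        rw [hm, Nat.mul_add_mod]
      have hxge : p.2 ≤ x := le_trans hp2N (not_lt.mp hxN)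
      obtain ⟨t, ht⟩ := (Nat.modEq_iff_dvd' hxge).mp hxp.symm
      have hx : x ∈ AP p.1 p.2 := ⟨t, by omega⟩
      exact Set.mem_biUnion hps hx
    · refine Or.inr (Or.inl (Set.mem_biUnion ?_ (self_mem_AP x)))
      exact Finset.mem_filter.mpr ⟨Finset.mem_range.mpr (Nat.mod_lt x hk), hocc⟩
  have hU : μ (⋃ h ∈ T, AP k h) ≤ (T.card : ℝ) / k := by
    calc μ _ ≤ ∑ h ∈ T, μ (AP k h) := mu_biUnion hμ _ _
      _ = ∑ _h ∈ T, (1 / k : ℝ) := Finset.sum_congr rfl (fun h _ => mu_AP hμ hk h)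
      _ = T.card * (1 / k) := by rw [Finset.sum_const, nsmul_eq_mul]
      _ = (T.card : ℝ) / k := by ring
  have hF : μ (Set.Iio N) ≤ 0 := mu_finite_nonpos hμ (Set.finite_Iio N)
  have h3 := hμ.2.2.1
  have hsplit : (1 : ℝ) ≤ μ A + μ (⋃ h ∈ T, AP k h) + μ (Set.Iio N) := by
    have he : A ∪ ((⋃ h ∈ T, AP k h) ∪ Set.Iio N) = Set.univ :=
      Set.eq_univ_of_univ_subset hcover
    have b1 := h3 A ((⋃ h ∈ T, AP k h) ∪ Set.Iio N)
    have b2 := h3 (⋃ h ∈ T, AP k h) (Set.Iio N)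
    rw [he, hμ.1] at b1
    linarith
  have hOT : O.card + T.card = k := by
    rw [hO, hT, Finset.card_filter_add_card_filter_not, Finset.card_range]
  have hrk : (rk k X : ℝ) ≤ O.card := by
    rw [rk_eq_card]
    have hsub : (Finset.range k).filter (fun h => (X ∩ AP k h).Nonempty) ⊆ O := by
      apply Finset.monotone_filter_right
      intro h _ hne
      exact hne.mono (Set.inter_subset_inter_left _ hXA)
    exact_mod_cast Finset.card_le_card hsub
  have hTc : (T.card : ℝ) = k - O.card := by
    have := congrArg (fun n : ℕ => (n : ℝ)) hOT
    push_cast at this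
    linarith
  rw [div_le_iff₀ hkR]
  have hμU : (1 : ℝ) - μ A ≤ μ (⋃ h ∈ T, AP k h) := by linarith
  have hprod : ((1 : ℝ) - μ A) * k ≤ μ (⋃ h ∈ T, AP k h) * k :=
    mul_le_mul_of_nonneg_right hμU hkR.le
  have hUk : μ (⋃ h ∈ T, AP k h) * k ≤ (T.card : ℝ) := (le_div_iff₀ hkR).mp hU
  nlinarith [hrk, hTc, hprod, hUk]

/-- For any upper quasi-density μ*, the infimum of μ*(A) over finite unions A of
arithmetic progressions containing X equals inf_{k ≥ 1} r_k(X)/k. -/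
theorem inf_over_finUnionAP_eq_iInf_rk (μ : Set ℕ → ℝ)
    (hμ : IsUpperQuasiDensity μ) (X : Set ℕ) :
    sInf {d : ℝ | ∃ A : Set ℕ, IsFinUnionAP A ∧ X ⊆ A ∧ d = μ A} =
      ⨅ k : ℕ+, (rk (k : ℕ) X : ℝ) / ((k : ℕ) : ℝ) := by

  have hbdd : BddBelow (Set.range fun k : ℕ+ => (rk (k : ℕ) X : ℝ) / ((k : ℕ) : ℝ)) := by
    refine ⟨0, ?_⟩
    rintro x ⟨j, rfl⟩
    positivity
  have hlb : ∀ d ∈ {d : ℝ | ∃ A : Set ℕ, IsFinUnionAP A ∧ X ⊆ A ∧ d = μ A},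
      (⨅ k : ℕ+, (rk (k : ℕ) X : ℝ) / ((k : ℕ) : ℝ)) ≤ d := by
    rintro d ⟨A, hA, hXA, rfl⟩
    obtain ⟨k, hk, hle⟩ := key_lower hμ hA hXA
    exact le_trans (ciInf_le hbdd ⟨k, hk⟩) hle
  have hne : {d : ℝ | ∃ A : Set ℕ, IsFinUnionAP A ∧ X ⊆ A ∧ d = μ A}.Nonempty := by
    refine ⟨μ Set.univ, Set.univ, ⟨{(1, 0)}, by norm_num, ?_⟩, Set.subset_univ _, rfl⟩
    ext x
    simp only [Finset.mem_singleton, Set.mem_iUnion]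
    constructor
    · intro _; exact ⟨(1, 0), rfl, x, by omega⟩
    · intro _; trivial
  refine le_antisymm (le_ciInf fun k => ?_) (le_csInf hne hlb)
  obtain ⟨A, hA, hXA, hb⟩ := key_upper hμ X k.2
  exact le_trans (csInf_le ⟨_, hlb⟩ ⟨A, hA, hXA, rfl⟩) hb
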